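/- Let x₁, …, x_M be i.i.d. random vectors in ℝⁿ whose coordinates X₁, …, Xₙ are independent random variables satisfying 0 ≤ Xᵢ ≤ 1 with variances σᵢ² > σ₀² > 0, centralised so that each coordinate has zero mean (i.e., the mean of each original coordinate is subtracted). Set R₀² = Σᵢ σᵢ² ≥ n σ₀², and let 0 < δ < 2/3. Then P( 1 − δ ≤ ‖xⱼ‖²/R₀² ≤ 1 + δ for all j, and (xᵢ, x_M)/(R₀ ‖x_M‖) < √(1 − δ) for all i ≠ M ) ≥ 1 − 2M exp(−2δ² R₀⁴ / n) − (M − 1) exp(−2 R₀⁴ (2 − 3δ)² / n). -/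

import Mathlib

open MeasureTheory ProbabilityTheory RealInnerProductSpace

section Helpers
open Real



lemma gpos {p : ℝ} (hp0 : 0 ≤ p) (hp1 : p ≤ 1) (h : ℝ) :
    0 < 1 - p + p * Real.exp h := by
  nlinarith [Real.exp_pos h, mul_nonneg hp0 (Real.exp_pos h).le]

lemma phi_deriv {p : ℝ} (hp0 : 0 ≤ p) (hp1 : p ≤ 1) (h : ℝ) :
    HasDerivAt (fun h => h ^ 2 / 8 + p * h - Real.log (1 - p + p * Real.exp h))
      (h / 4 + p - p * Real.exp h / (1 - p + p * Real.exp h)) h := by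
  have hg : HasDerivAt (fun h => 1 - p + p * Real.exp h) (p * Real.exp h) h :=
    ((Real.hasDerivAt_exp h).const_mul p).const_add (1 - p)
  have hlog := hg.log (gpos hp0 hp1 h).ne'
  have h1 : HasDerivAt (fun h : ℝ => h ^ 2 / 8 + p * h) (h / 4 + p) h := by
    have := ((hasDerivAt_pow 2 h).div_const 8).add ((hasDerivAt_id h).const_mul p)
    exact this.congr_deriv (by norm_num; ring)
  exact h1.sub hlog

lemma psi_deriv {p : ℝ} (hp0 : 0 ≤ p) (hp1 : p ≤ 1) (h : ℝ) :
    HasDerivAt (fun h => h / 4 + p - p * Real.exp h / (1 - p + p * Real.exp h))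
      (1 / 4 - (p * Real.exp h * (1 - p + p * Real.exp h) -
        p * Real.exp h * (p * Real.exp h)) / (1 - p + p * Real.exp h) ^ 2) h := by
  have hg : HasDerivAt (fun h => 1 - p + p * Real.exp h) (p * Real.exp h) h :=
    ((Real.hasDerivAt_exp h).const_mul p).const_add (1 - p)
  have hnum : HasDerivAt (fun h => p * Real.exp h) (p * Real.exp h) h :=
    (Real.hasDerivAt_exp h).const_mul p
  have hdiv := hnum.div hg (gpos hp0 hp1 h).ne'
  have h1 : HasDerivAt (fun h : ℝ => h / 4 + p) (1 / 4) h := by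
    simpa using (hasDerivAt_id h).div_const (4:ℝ) |>.add_const p
  exact h1.sub hdiv

lemma psi_deriv_nonneg {p : ℝ} (hp0 : 0 ≤ p) (hp1 : p ≤ 1) (h : ℝ) :
    0 ≤ 1 / 4 - (p * Real.exp h * (1 - p + p * Real.exp h) -
        p * Real.exp h * (p * Real.exp h)) / (1 - p + p * Real.exp h) ^ 2 := by
  have hg := gpos hp0 hp1 h
  rw [sub_nonneg, div_le_iff₀ (by positivity)]
  nlinarith [Real.exp_pos h, sq_nonneg (1 - p - p * Real.exp h)]

lemma phi_nonneg {p : ℝ} (hp0 : 0 ≤ p) (hp1 : p ≤ 1) (h : ℝ) :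
    0 ≤ h ^ 2 / 8 + p * h - Real.log (1 - p + p * Real.exp h) := by
  set ψ : ℝ → ℝ := fun h => h / 4 + p - p * Real.exp h / (1 - p + p * Real.exp h) with hψ
  have hψmono : Monotone ψ := by
    apply monotone_of_deriv_nonneg
    · exact fun x => (psi_deriv hp0 hp1 x).differentiableAt
    · intro x
      rw [(psi_deriv hp0 hp1 x).deriv]
      exact psi_deriv_nonneg hp0 hp1 x
  have hψ0 : ψ 0 = 0 := by simp [hψ]
  set φ : ℝ → ℝ := fun h => h ^ 2 / 8 + p * h - Real.log (1 - p + p * Real.exp h) with hφ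
  have hφ0 : φ 0 = 0 := by simp [hφ]
  have hd : ∀ x, HasDerivAt φ (ψ x) x := fun x => phi_deriv hp0 hp1 x
  rcases le_total 0 h with hh | hh
  · have : MonotoneOn φ (Set.Ici 0) := by
      apply monotoneOn_of_deriv_nonneg (convex_Ici 0)
        (fun x _ => (hd x).differentiableAt.continuousAt.continuousWithinAt)
        (fun x _ => (hd x).differentiableAt.differentiableWithinAt)
      intro x hx
      rw [(hd x).deriv]
      rw [interior_Ici] at hx
      calc (0:ℝ) = ψ 0 := hψ0.symm
        _ ≤ ψ x := hψmono hx.le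
    have := this (Set.self_mem_Ici) (Set.mem_Ici.2 hh) hh
    rw [hφ0] at this; exact this
  · have : AntitoneOn φ (Set.Iic 0) := by
      apply antitoneOn_of_deriv_nonpos (convex_Iic 0)
        (fun x _ => (hd x).differentiableAt.continuousAt.continuousWithinAt)
        (fun x _ => (hd x).differentiableAt.differentiableWithinAt)
      intro x hx
      rw [(hd x).deriv]
      rw [interior_Iic] at hx
      calc ψ x ≤ ψ 0 := hψmono hx.le
        _ = 0 := hψ0
    have := this (Set.mem_Iic.2 hh) (Set.self_mem_Iic) hh
    rw [hφ0] at this; exact this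

/-- Key inequality in Hoeffding's lemma. -/
lemma hoeffding_key {p : ℝ} (hp0 : 0 ≤ p) (hp1 : p ≤ 1) (h : ℝ) :
    (1 - p) * Real.exp (-(p * h)) + p * Real.exp ((1 - p) * h) ≤ Real.exp (h ^ 2 / 8) := by
  have hg := gpos hp0 hp1 h
  have key := phi_nonneg hp0 hp1 h
  have hL : (1 - p) * Real.exp (-(p * h)) + p * Real.exp ((1 - p) * h)
      = Real.exp (-(p * h) + Real.log (1 - p + p * Real.exp h)) := by
    rw [Real.exp_add, Real.exp_log hg]
    rw [show (1 - p) * h = -(p*h) + h by ring, Real.exp_add]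
    ring
  rw [hL]
  exact Real.exp_le_exp.2 (by linarith)

section
variable {Ω : Type*} [MeasurableSpace Ω] {μ : Measure Ω} [IsProbabilityMeasure μ]

lemma integrable_of_ae_icc {f : Ω → ℝ} (hf : AEMeasurable f μ) {a b : ℝ}
    (hab : ∀ᵐ ω ∂μ, f ω ∈ Set.Icc a b) : Integrable f μ := by
  refine Integrable.mono' (integrable_const (max |a| |b|)) hf.aestronglyMeasurable ?_
  filter_upwards [hab] with ω hω
  rw [Real.norm_eq_abs, abs_le]
  constructor
  · calc -(max |a| |b|) ≤ -|a| := by simp [neg_le_neg_iff, le_max_left]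
      _ ≤ a := neg_abs_le a
      _ ≤ f ω := hω.1
  · calc f ω ≤ b := hω.2
      _ ≤ |b| := le_abs_self b
      _ ≤ max |a| |b| := le_max_right _ _

lemma hoeffding_mgf {f : Ω → ℝ} (hf : AEMeasurable f μ) {a b : ℝ}
    (hab : ∀ᵐ ω ∂μ, f ω ∈ Set.Icc a b) (hmean : ∫ ω, f ω ∂μ = 0) (t : ℝ) :
    ∫ ω, Real.exp (t * f ω) ∂μ ≤ Real.exp (t ^ 2 * (b - a) ^ 2 / 8) := by
  have hfint : Integrable f μ := integrable_of_ae_icc hf hab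
  have hale : a ≤ b := by
    by_contra hc
    push_neg at hc
    have h2 : ∀ᵐ ω ∂μ, False := by
      filter_upwards [hab] with ω hω; exact absurd (hω.1.trans hω.2) (not_le.2 hc)
    have hμ0 : μ = 0 := by simpa using h2
    exact IsProbabilityMeasure.ne_zero μ hμ0
  have ha0 : a ≤ 0 := by
    have : ∫ ω, (a : ℝ) ∂μ ≤ ∫ ω, f ω ∂μ := by
      apply integral_mono_ae (integrable_const a) hfint
      filter_upwards [hab] with ω hω using hω.1
    simpa [hmean, integral_const] using this
  have hb0 : 0 ≤ b := by
    have : ∫ ω, f ω ∂μ ≤ ∫ ω, (b : ℝ) ∂μ := by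
      apply integral_mono_ae hfint (integrable_const b)
      filter_upwards [hab] with ω hω using hω.2
    simpa [hmean, integral_const] using this
  rcases eq_or_lt_of_le hale with heq | hlt
  · -- a = b, so a = b = 0 and f = 0 a.e.
    have ha : a = 0 := le_antisymm ha0 (heq ▸ hb0)
    have hb : b = 0 := heq ▸ ha
    have hfz : ∀ᵐ ω ∂μ, f ω = 0 := by
      filter_upwards [hab] with ω hω
      rw [ha, hb] at hω; exact le_antisymm hω.2 hω.1
    have : ∫ ω, Real.exp (t * f ω) ∂μ = 1 := by
      rw [integral_congr_ae (g := fun _ => (1:ℝ)) ?_, integral_const]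
      · simp
      · filter_upwards [hfz] with ω hω; simp [hω]
    rw [this]
    exact Real.one_le_exp (by positivity)
  · -- a < b
    have hba : 0 < b - a := sub_pos.2 hlt
    set p : ℝ := -a / (b - a) with hp
    have hp0 : 0 ≤ p := div_nonneg (neg_nonneg.2 ha0) hba.le
    have hp1 : p ≤ 1 := by
      rw [hp, div_le_one hba]; linarith
    set h : ℝ := t * (b - a) with hh
    -- pointwise convexity bound
    have hpt : ∀ᵐ ω ∂μ, Real.exp (t * f ω) ≤
        (b - f ω) / (b - a) * Real.exp (t * a) + (f ω - a) / (b - a) * Real.exp (t * b) := by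
      filter_upwards [hab] with ω hω
      have hl : 0 ≤ (b - f ω) / (b - a) := div_nonneg (by linarith [hω.2]) hba.le
      have hr : 0 ≤ (f ω - a) / (b - a) := div_nonneg (by linarith [hω.1]) hba.le
      have hs : (b - f ω) / (b - a) + (f ω - a) / (b - a) = 1 := by
        field_simp; ring
      have := convexOn_exp.2 (Set.mem_univ (t * a)) (Set.mem_univ (t * b)) hl hr hs
      simp only [smul_eq_mul] at this
      have harg : (b - f ω) / (b - a) * (t * a) + (f ω - a) / (b - a) * (t * b) = t * f ω := by
        field_simp; ring
      rw [harg] at this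
      exact this
    have hint1 : Integrable (fun ω => Real.exp (t * f ω)) μ := by
      apply integrable_of_ae_icc (Real.measurable_exp.comp_aemeasurable
        (hf.const_mul t)) (a := 0) (b := Real.exp (|t| * max |a| |b|))
      filter_upwards [hab] with ω hω
      refine ⟨(Real.exp_pos _).le, Real.exp_le_exp.2 ?_⟩
      calc t * f ω ≤ |t * f ω| := le_abs_self _
        _ = |t| * |f ω| := abs_mul _ _
        _ ≤ |t| * max |a| |b| := by
            apply mul_le_mul_of_nonneg_left _ (abs_nonneg t)
            rw [abs_le]
            constructor
            · calc -(max |a| |b|) ≤ -|a| := by simp [le_max_left]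
                _ ≤ a := neg_abs_le a
                _ ≤ f ω := hω.1
            · exact hω.2.trans ((le_abs_self b).trans (le_max_right _ _))
    have hint2 : Integrable (fun ω => (b - f ω) / (b - a) * Real.exp (t * a) +
        (f ω - a) / (b - a) * Real.exp (t * b)) μ := by
      apply Integrable.add
      · exact ((((integrable_const b).sub hfint).div_const _).mul_const _)
      · exact (((hfint.sub (integrable_const a)).div_const _).mul_const _)
    calc ∫ ω, Real.exp (t * f ω) ∂μ
        ≤ ∫ ω, ((b - f ω) / (b - a) * Real.exp (t * a) +
            (f ω - a) / (b - a) * Real.exp (t * b)) ∂μ := integral_mono_ae hint1 hint2 hpt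
      _ = (1 - p) * Real.exp (-(p * h)) + p * Real.exp ((1 - p) * h) := by
          have h1 : (1 : ℝ) - p = b / (b - a) := by rw [hp]; field_simp; ring
          have h2 : -(p * h) = t * a := by rw [hp, hh]; field_simp
          have h3 : (1 - p) * h = t * b := by rw [h1, hh]; field_simp
          have hfe : (fun ω => (b - f ω) / (b - a) * Real.exp (t * a) +
              (f ω - a) / (b - a) * Real.exp (t * b)) =
              fun ω => ((Real.exp (t * b) - Real.exp (t * a)) / (b - a)) * f ω +
                (b * Real.exp (t * a) - a * Real.exp (t * b)) / (b - a) := by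
            funext ω; field_simp; ring
          rw [hfe, integral_add (hfint.const_mul _) (integrable_const _),
            integral_const_mul, hmean, integral_const]
          simp only [measure_univ, probReal_univ, smul_eq_mul, one_mul, mul_zero, zero_add]
          rw [h2, h3, h1, hp]
          field_simp
          ring
      _ ≤ Real.exp (h ^ 2 / 8) := hoeffding_key hp0 hp1 h
      _ = Real.exp (t ^ 2 * (b - a) ^ 2 / 8) := by rw [hh]; ring_nf

end


lemma integral_pi_prod {n : ℕ} (ν : Fin n → Measure ℝ) [h : ∀ i, IsProbabilityMeasure (ν i)]
    (f : Fin n → ℝ → ℝ) :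
    ∫ y, ∏ i, f i (y i) ∂(Measure.pi ν) = ∏ i, ∫ x, f i x ∂(ν i) := by
  letI M : ∀ i : Fin n, MeasureSpace ℝ := fun i => ⟨ν i⟩
  have S : ∀ i : Fin n, SigmaFinite (M i).volume := fun i => inferInstance
  exact integral_fintype_prod_eq_prod (μ := ν) f

lemma ae_pi_forall {n : ℕ} (ν : Fin n → Measure ℝ) [∀ i, IsProbabilityMeasure (ν i)]
    (Q : Fin n → ℝ → Prop) (hQ : ∀ i, ∀ᵐ x ∂ν i, Q i x) :
    ∀ᵐ y ∂(Measure.pi ν), ∀ i, Q i (y i) := by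
  rw [MeasureTheory.ae_iff]
  have : {y : Fin n → ℝ | ¬ ∀ i, Q i (y i)} ⊆ ⋃ i, Function.eval i ⁻¹' {x | ¬ Q i x} := by
    intro y hy
    push_neg at hy
    obtain ⟨i, hi⟩ := hy
    exact Set.mem_iUnion.2 ⟨i, hi⟩
  refine measure_mono_null this ?_
  refine measure_iUnion_null fun i => ?_
  exact MeasureTheory.Measure.pi_eval_preimage_null ν (by simpa [MeasureTheory.ae_iff] using hQ i)

lemma hoeffding_pi {n : ℕ} (ν : Fin n → Measure ℝ) [∀ i, IsProbabilityMeasure (ν i)]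
    (g : Fin n → ℝ → ℝ) (hg : ∀ i, Measurable (g i)) (a b : Fin n → ℝ)
    (hab : ∀ i, ∀ᵐ x ∂ν i, g i x ∈ Set.Icc (a i) (b i))
    (hmean : ∀ i, ∫ x, g i x ∂ν i = 0) (ε : ℝ) (hε : 0 ≤ ε)
    (hC : 0 < ∑ i, (b i - a i) ^ 2) :
    ((Measure.pi ν) {y | ε ≤ ∑ i, g i (y i)}).toReal ≤
      Real.exp (-2 * ε ^ 2 / ∑ i, (b i - a i) ^ 2) := by
  set C : ℝ := ∑ i, (b i - a i) ^ 2 with hCdef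
  set t : ℝ := 4 * ε / C with htdef
  have ht : 0 ≤ t := div_nonneg (by linarith) hC.le
  set S : (Fin n → ℝ) → ℝ := fun y => ∑ i, g i (y i) with hSdef
  have hSmeas : Measurable S := by
    apply Finset.measurable_sum
    exact fun i _ => (hg i).comp (measurable_pi_apply i)
  have hbd : ∀ᵐ y ∂(Measure.pi ν), ∀ i, g i (y i) ∈ Set.Icc (a i) (b i) :=
    ae_pi_forall ν _ hab
  have hint : Integrable (fun y => Real.exp (t * S y)) (Measure.pi ν) := by
    apply integrable_of_ae_icc (a := 0) (b := Real.exp (|t| * ∑ i, max |a i| |b i|))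
      (Real.measurable_exp.comp (hSmeas.const_mul t)).aemeasurable
    filter_upwards [hbd] with y hy
    refine ⟨(Real.exp_pos _).le, Real.exp_le_exp.2 ?_⟩
    calc t * S y ≤ |t * S y| := le_abs_self _
      _ = |t| * |S y| := abs_mul _ _
      _ ≤ |t| * ∑ i, max |a i| |b i| := by
          apply mul_le_mul_of_nonneg_left _ (abs_nonneg t)
          calc |S y| ≤ ∑ i, |g i (y i)| := Finset.abs_sum_le_sum_abs _ _
            _ ≤ ∑ i, max |a i| |b i| := by
                apply Finset.sum_le_sum
                intro i _
                rcases abs_le_max_abs_abs (hy i).1 (hy i).2 with h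
                exact h
  have hmgf : mgf S (Measure.pi ν) t ≤ Real.exp (t ^ 2 * C / 8) := by
    have hfac : mgf S (Measure.pi ν) t = ∏ i, ∫ x, Real.exp (t * g i x) ∂ν i := by
      rw [mgf]
      rw [show (fun ω => Real.exp (t * S ω)) = fun y => ∏ i, Real.exp (t * g i (y i)) by
        funext y; rw [← Real.exp_sum]; congr 1; rw [hSdef, Finset.mul_sum]]
      exact integral_pi_prod ν fun i x => Real.exp (t * g i x)
    rw [hfac]
    calc ∏ i, ∫ x, Real.exp (t * g i x) ∂ν i
        ≤ ∏ i, Real.exp (t ^ 2 * (b i - a i) ^ 2 / 8) := by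
          apply Finset.prod_le_prod
          · intro i _
            exact integral_nonneg fun x => (Real.exp_pos _).le
          · intro i _
            exact hoeffding_mgf (hg i).aemeasurable (hab i) (hmean i) t
      _ = Real.exp (t ^ 2 * C / 8) := by
          rw [← Real.exp_sum]
          congr 1
          rw [hCdef, Finset.mul_sum, ← Finset.sum_div]
  have key := measure_ge_le_exp_mul_mgf (X := S) (μ := Measure.pi ν) ε ht hint
  calc ((Measure.pi ν) {y | ε ≤ S y}).toReal
      ≤ Real.exp (-t * ε) * mgf S (Measure.pi ν) t := key
    _ ≤ Real.exp (-t * ε) * Real.exp (t ^ 2 * C / 8) :=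
        mul_le_mul_of_nonneg_left hmgf (Real.exp_pos _).le
    _ = Real.exp (-t * ε + t ^ 2 * C / 8) := (Real.exp_add _ _).symm
    _ = Real.exp (-2 * ε ^ 2 / C) := by
        congr 1
        rw [htdef]
        field_simp
        ring

lemma mul_mem_Icc_minmax {p q c u : ℝ} (h : u ∈ Set.Icc p q) :
    u * c ∈ Set.Icc (min (p * c) (q * c)) (max (p * c) (q * c)) := by
  rcases le_total 0 c with hc | hc
  · exact ⟨le_trans (min_le_left _ _) (mul_le_mul_of_nonneg_right h.1 hc),
      le_trans (mul_le_mul_of_nonneg_right h.2 hc) (le_max_right _ _)⟩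
  · exact ⟨le_trans (min_le_right _ _) (mul_le_mul_of_nonpos_right h.2 hc),
      le_trans (mul_le_mul_of_nonpos_right h.1 hc) (le_max_left _ _)⟩

lemma mean_in_01 {μ : Measure ℝ} [IsProbabilityMeasure μ] {m : ℝ}
    (hsupp : ∀ᵐ x ∂μ, x ∈ Set.Icc (-m) (1 - m)) (hmean : ∫ x, x ∂μ = 0) :
    0 ≤ m ∧ m ≤ 1 := by
  have hint : Integrable (fun x : ℝ => x) μ :=
    integrable_of_ae_icc measurable_id.aemeasurable hsupp
  have h1 : ∫ x, (-m : ℝ) ∂μ ≤ ∫ x, x ∂μ := by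
    apply integral_mono_ae (integrable_const _) hint
    filter_upwards [hsupp] with x hx using hx.1
  have h2 : ∫ x, x ∂μ ≤ ∫ x, (1 - m : ℝ) ∂μ := by
    apply integral_mono_ae hint (integrable_const _)
    filter_upwards [hsupp] with x hx using hx.2
  rw [hmean, integral_const] at h1 h2
  simp only [measure_univ, probReal_univ, one_smul, smul_eq_mul, one_mul] at h1 h2
  constructor <;> linarith

lemma var_le_quarter {μ : Measure ℝ} [IsProbabilityMeasure μ] {m σ2 : ℝ}
    (hsupp : ∀ᵐ x ∂μ, x ∈ Set.Icc (-m) (1 - m))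
    (hmean : ∫ x, x ∂μ = 0) (hvar : ∫ x, x ^ 2 ∂μ = σ2) : σ2 ≤ 1 / 4 := by
  obtain ⟨hm0, hm1⟩ := mean_in_01 hsupp hmean
  have hint : Integrable (fun x : ℝ => x) μ :=
    integrable_of_ae_icc measurable_id.aemeasurable hsupp
  have hint2 : Integrable (fun x : ℝ => x ^ 2) μ := by
    apply integrable_of_ae_icc (a := 0) (b := 1)
      ((continuous_pow 2).measurable.aemeasurable)
    filter_upwards [hsupp] with x hx
    constructor
    · positivity
    · have h1 : -1 ≤ x := by have := hx.1; linarith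
      have h2 : x ≤ 1 := by have := hx.2; linarith
      nlinarith
  have hkey : ∫ x, (x ^ 2 + (2 * m - 1) * x + (m * m - m)) ∂μ ≤ 0 := by
    apply integral_nonpos_of_ae
    filter_upwards [hsupp] with x hx
    simp only [Pi.zero_apply]
    have h := mul_nonpos_of_nonneg_of_nonpos
      (by linarith [hx.1] : (0:ℝ) ≤ x + m) (by linarith [hx.2] : x + m - 1 ≤ 0)
    nlinarith [h]
  have hA : Integrable (fun x : ℝ => x ^ 2 + (2 * m - 1) * x) μ := hint2.add (hint.const_mul _)
  rw [integral_add hA (integrable_const _),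
    integral_add hint2 (hint.const_mul _), integral_const_mul, hmean, hvar,
    integral_const] at hkey
  simp only [measure_univ, probReal_univ, smul_eq_mul, one_mul, mul_zero, add_zero] at hkey
  nlinarith [sq_nonneg (m - 1/2)]


end Helpers

set_option maxHeartbeats 2000000 in
theorem stochastic_separation_product_cube_single
    (n M : ℕ) (hn : 0 < n) (hM : 0 < M)
    (σ : Fin n → ℝ) (σ₀ : ℝ) (hσ₀ : 0 < σ₀) (hσ : ∀ i, σ₀ ^ 2 < σ i ^ 2)
    (m : Fin n → ℝ) (ν : Fin n → Measure ℝ) (hνprob : ∀ i, IsProbabilityMeasure (ν i))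
    (hsupp : ∀ i, ν i {x : ℝ | x + m i ∈ Set.Icc (0 : ℝ) 1} = 1)
    (hmean : ∀ i, ∫ x, x ∂(ν i) = 0)
    (hvar : ∀ i, ∫ x, x ^ 2 ∂(ν i) = σ i ^ 2)
    (R₀ : ℝ) (hR₀pos : 0 < R₀) (hR₀ : R₀ ^ 2 = ∑ i, σ i ^ 2)
    (δ : ℝ) (hδ : 0 < δ) (hδ1 : δ < 2 / 3)
    (Ω : Type*) [MeasurableSpace Ω] (P : Measure Ω) [IsProbabilityMeasure P]
    (X : Fin M → Ω → EuclideanSpace ℝ (Fin n))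
    (hmeas : ∀ i, Measurable (X i))
    (hindep : iIndepFun X P)
    (hdist : ∀ i, Measure.map (X i) P =
      (Measure.pi ν).map (MeasurableEquiv.toLp 2 (Fin n → ℝ))) :
    (P {ω | (∀ j : Fin M, 1 - δ ≤ ‖X j ω‖ ^ 2 / R₀ ^ 2 ∧ ‖X j ω‖ ^ 2 / R₀ ^ 2 ≤ 1 + δ) ∧
        ∀ i : Fin M, i ≠ ⟨M - 1, Nat.sub_lt hM Nat.one_pos⟩ →
          ⟪X i ω, X (⟨M - 1, Nat.sub_lt hM Nat.one_pos⟩ : Fin M) ω⟫ /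
            (R₀ * ‖X (⟨M - 1, Nat.sub_lt hM Nat.one_pos⟩ : Fin M) ω‖) <
          Real.sqrt (1 - δ)}).toReal ≥
      1 - 2 * (M : ℝ) * Real.exp (-2 * δ ^ 2 * R₀ ^ 4 / n) -
        ((M : ℝ) - 1) * Real.exp (-2 * R₀ ^ 4 * (2 - 3 * δ) ^ 2 / n) := by
  haveI hνi : ∀ i, IsProbabilityMeasure (ν i) := hνprob
  set e : (Fin n → ℝ) ≃ᵐ WithLp 2 (Fin n → ℝ) := MeasurableEquiv.toLp 2 (Fin n → ℝ)
    with he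
  set μ₀ : Measure (EuclideanSpace ℝ (Fin n)) := (Measure.pi ν).map e with hμ₀
  haveI : IsProbabilityMeasure μ₀ :=
    Measure.isProbabilityMeasure_map e.measurable.aemeasurable
  set lst : Fin M := ⟨M - 1, Nat.sub_lt hM Nat.one_pos⟩ with hlst
  set e₁ : ℝ := Real.exp (-2 * δ ^ 2 * R₀ ^ 4 / n) with he₁
  set e₂ : ℝ := Real.exp (-2 * R₀ ^ 4 * (2 - 3 * δ) ^ 2 / n) with he₂
  have he₁pos : 0 < e₁ := Real.exp_pos _
  have he₂pos : 0 < e₂ := Real.exp_pos _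
  have hn' : (0 : ℝ) < n := by exact_mod_cast hn
  have hδ1' : δ < 1 := by linarith
  -- a.e. support
  have hae : ∀ i, ∀ᵐ x ∂ν i, x ∈ Set.Icc (-(m i)) (1 - m i) := by
    intro i
    have hseteq : {x : ℝ | x + m i ∈ Set.Icc (0:ℝ) 1} = Set.Icc (-(m i)) (1 - m i) := by
      ext x
      simp only [Set.mem_setOf_eq, Set.mem_Icc]
      constructor <;> intro h <;> exact ⟨by linarith [h.1], by linarith [h.2]⟩
    have h1 : ν i (Set.Icc (-(m i)) (1 - m i)) = 1 := by rw [← hseteq]; exact hsupp i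
    rw [← prob_compl_eq_zero_iff measurableSet_Icc] at h1
    rw [MeasureTheory.ae_iff]
    exact h1
  have hm01 : ∀ i, 0 ≤ m i ∧ m i ≤ 1 := fun i => mean_in_01 (hae i) (hmean i)
  have hσ4 : ∀ i, σ i ^ 2 ≤ 1 / 4 := fun i => var_le_quarter (hae i) (hmean i) (hvar i)
  have hR4 : R₀ ^ 2 ≤ n / 4 := by
    rw [hR₀]
    calc ∑ i, σ i ^ 2 ≤ ∑ _i : Fin n, (1:ℝ)/4 := Finset.sum_le_sum fun i _ => hσ4 i
      _ = n / 4 := by rw [Finset.sum_const, Finset.card_univ, Fintype.card_fin,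
            nsmul_eq_mul]; ring
  have hR2pos : (0:ℝ) < R₀ ^ 2 := by positivity
  -- integrability of coordinates and squares
  have hint1 : ∀ i, Integrable (fun x : ℝ => x) (ν i) := fun i =>
    integrable_of_ae_icc measurable_id.aemeasurable (hae i)
  have hint2 : ∀ i, Integrable (fun x : ℝ => x ^ 2) (ν i) := by
    intro i
    apply integrable_of_ae_icc (a := 0) (b := 1) ((continuous_pow 2).measurable.aemeasurable)
    filter_upwards [hae i] with x hx
    have h1 : -1 ≤ x := by linarith [hx.1, (hm01 i).2]
    have h2 : x ≤ 1 := by linarith [hx.2, (hm01 i).1]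
    exact ⟨by positivity, by nlinarith⟩
  -- norm squared formula
  have hnrm : ∀ y : Fin n → ℝ, ‖e y‖ ^ 2 = ∑ i, (y i) ^ 2 := by
    intro y
    rw [EuclideanSpace.norm_eq, Real.sq_sqrt (by positivity)]
    simp only [Real.norm_eq_abs, sq_abs]
    exact Finset.sum_congr rfl fun i _ => rfl
  -- generic tail application
  have happ : ∀ (g : Fin n → ℝ → ℝ), (∀ i, Measurable (g i)) → ∀ (a b : Fin n → ℝ),
      (∀ i, ∀ᵐ x ∂ν i, g i x ∈ Set.Icc (a i) (b i)) → (∀ i, ∫ x, g i x ∂ν i = 0) →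
      (∀ i, b i - a i = 1) →
      (Measure.pi ν) {y | δ * R₀ ^ 2 ≤ ∑ i, g i (y i)} ≤ ENNReal.ofReal e₁ := by
    intro g hg a b hab hgmean hba
    have hCeq : ∑ i, (b i - a i) ^ 2 = (n : ℝ) := by
      rw [Finset.sum_congr rfl fun i _ => by rw [hba i]]
      simp
    have hC : 0 < ∑ i, (b i - a i) ^ 2 := by rw [hCeq]; exact hn'
    have := hoeffding_pi ν g hg a b hab hgmean (δ * R₀ ^ 2) (by positivity) hC
    rw [hCeq] at this
    rw [ENNReal.le_ofReal_iff_toReal_le (measure_ne_top _ _) he₁pos.le]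
    refine this.trans (le_of_eq ?_)
    rw [he₁]
    congr 1
    ring
  -- norm tail bound
  have hnormtail : ∀ j : Fin M,
      P {ω | ¬(1 - δ ≤ ‖X j ω‖ ^ 2 / R₀ ^ 2 ∧ ‖X j ω‖ ^ 2 / R₀ ^ 2 ≤ 1 + δ)} ≤
        ENNReal.ofReal (2 * e₁) := by
    intro j
    have hfm : Measurable fun x : EuclideanSpace ℝ (Fin n) => ‖x‖ ^ 2 / R₀ ^ 2 :=
      ((continuous_norm.pow 2).div_const _).measurable
    have hAmeas : MeasurableSet {x : EuclideanSpace ℝ (Fin n) | ¬(1 - δ ≤ ‖x‖ ^ 2 / R₀ ^ 2 ∧ ‖x‖ ^ 2 / R₀ ^ 2 ≤ 1 + δ)} :=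
      (measurableSet_Icc.preimage hfm).compl
    have hpre : {ω | ¬(1 - δ ≤ ‖X j ω‖ ^ 2 / R₀ ^ 2 ∧ ‖X j ω‖ ^ 2 / R₀ ^ 2 ≤ 1 + δ)} =
        X j ⁻¹' {x : EuclideanSpace ℝ (Fin n) | ¬(1 - δ ≤ ‖x‖ ^ 2 / R₀ ^ 2 ∧ ‖x‖ ^ 2 / R₀ ^ 2 ≤ 1 + δ)} := rfl
    rw [hpre, ← Measure.map_apply (hmeas j) hAmeas, hdist j,
      Measure.map_apply e.measurable hAmeas]
    have hsub : (⇑e) ⁻¹' {x : EuclideanSpace ℝ (Fin n) | ¬(1 - δ ≤ ‖x‖ ^ 2 / R₀ ^ 2 ∧ ‖x‖ ^ 2 / R₀ ^ 2 ≤ 1 + δ)} ⊆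
        {y | δ * R₀ ^ 2 ≤ ∑ i, (σ i ^ 2 - (y i) ^ 2)} ∪
        {y | δ * R₀ ^ 2 ≤ ∑ i, ((y i) ^ 2 - σ i ^ 2)} := by
      intro y hy
      simp only [Set.mem_preimage, Set.mem_setOf_eq] at hy
      push_neg at hy
      rw [hnrm y] at hy
      have hsum1 : ∑ i, (σ i ^ 2 - (y i) ^ 2) = R₀ ^ 2 - ∑ i, (y i) ^ 2 := by
        rw [Finset.sum_sub_distrib, hR₀]
      have hsum2 : ∑ i, ((y i) ^ 2 - σ i ^ 2) = (∑ i, (y i) ^ 2) - R₀ ^ 2 := by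
        rw [Finset.sum_sub_distrib, hR₀]
      rcases lt_or_ge ((∑ i, (y i) ^ 2) / R₀ ^ 2) (1 - δ) with h | h
      · left
        simp only [Set.mem_setOf_eq, hsum1]
        rw [div_lt_iff₀ hR2pos] at h
        nlinarith
      · right
        have h2 := hy h
        simp only [Set.mem_setOf_eq, hsum2]
        rw [lt_div_iff₀ hR2pos] at h2
        nlinarith
    refine le_trans (measure_mono hsub) (le_trans (measure_union_le _ _) ?_)
    have hb1 : (Measure.pi ν) {y | δ * R₀ ^ 2 ≤ ∑ i, (σ i ^ 2 - (y i) ^ 2)} ≤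
        ENNReal.ofReal e₁ := by
      apply happ (fun i u => σ i ^ 2 - u ^ 2)
        (fun i => (measurable_const.sub ((continuous_pow 2).measurable)))
        (fun i => σ i ^ 2 - 1) (fun i => σ i ^ 2)
      · intro i
        filter_upwards [hae i] with x hx
        have h1 : -1 ≤ x := by linarith [hx.1, (hm01 i).2]
        have h2 : x ≤ 1 := by linarith [hx.2, (hm01 i).1]
        rw [Set.mem_Icc]
        exact ⟨by nlinarith, by nlinarith⟩
      · intro i
        rw [integral_sub (integrable_const _) (hint2 i), hvar i, integral_const]
        simp
      · intro i; ring
    have hb2 : (Measure.pi ν) {y | δ * R₀ ^ 2 ≤ ∑ i, ((y i) ^ 2 - σ i ^ 2)} ≤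
        ENNReal.ofReal e₁ := by
      apply happ (fun i u => u ^ 2 - σ i ^ 2)
        (fun i => ((continuous_pow 2).measurable.sub measurable_const))
        (fun i => -(σ i ^ 2)) (fun i => 1 - σ i ^ 2)
      · intro i
        filter_upwards [hae i] with x hx
        have h1 : -1 ≤ x := by linarith [hx.1, (hm01 i).2]
        have h2 : x ≤ 1 := by linarith [hx.2, (hm01 i).1]
        rw [Set.mem_Icc]
        exact ⟨by nlinarith, by nlinarith⟩
      · intro i
        rw [integral_sub (hint2 i) (integrable_const _), hvar i, integral_const]
        simp
      · intro i; ring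
    calc (Measure.pi ν) {y | δ * R₀ ^ 2 ≤ ∑ i, (σ i ^ 2 - (y i) ^ 2)} +
          (Measure.pi ν) {y | δ * R₀ ^ 2 ≤ ∑ i, ((y i) ^ 2 - σ i ^ 2)}
        ≤ ENNReal.ofReal e₁ + ENNReal.ofReal e₁ := add_le_add hb1 hb2
      _ = ENNReal.ofReal (2 * e₁) := by
          rw [← ENNReal.ofReal_add he₁pos.le he₁pos.le]; ring_nf
  -- inner product tail
  set c : ℝ := Real.sqrt (1 - δ) with hc
  have hcpos : 0 < c := Real.sqrt_pos.2 (by linarith)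
  have hc2 : c ^ 2 = 1 - δ := Real.sq_sqrt (by linarith)
  have hdottail : ∀ i : Fin M, i ≠ lst →
      P {ω | ¬(⟪X i ω, X lst ω⟫ / (R₀ * ‖X lst ω‖) < c)} ≤ ENNReal.ofReal e₂ := by
    intro i hi
    set S : Set (EuclideanSpace ℝ (Fin n) × EuclideanSpace ℝ (Fin n)) :=
      {p | p.1 ≠ 0 ∧ c * (R₀ * ‖p.1‖) ≤ ⟪p.2, p.1⟫} with hSdef
    have hSmeas : MeasurableSet S := by
      have h1 : MeasurableSet {p : EuclideanSpace ℝ (Fin n) × EuclideanSpace ℝ (Fin n) |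
          p.1 ≠ 0} :=
        ((measurableSet_singleton (0 : EuclideanSpace ℝ (Fin n))).preimage measurable_fst).compl
      have h2 : MeasurableSet {p : EuclideanSpace ℝ (Fin n) × EuclideanSpace ℝ (Fin n) |
          c * (R₀ * ‖p.1‖) ≤ ⟪p.2, p.1⟫} := by
        apply measurableSet_le
        · exact (continuous_const.mul (continuous_const.mul continuous_fst.norm)).measurable
        · exact (continuous_inner.comp (continuous_snd.prodMk continuous_fst)).measurable
      exact h1.inter h2
    have hsub : {ω | ¬(⟪X i ω, X lst ω⟫ / (R₀ * ‖X lst ω‖) < c)} ⊆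
        (fun ω => (X lst ω, X i ω)) ⁻¹' S := by
      intro ω hω
      simp only [Set.mem_setOf_eq, not_lt] at hω
      have hz : X lst ω ≠ 0 := by
        intro h0
        rw [h0] at hω
        simp only [inner_zero_right, norm_zero, mul_zero, div_zero] at hω
        exact absurd hω (not_le.2 hcpos)
      have hpos : 0 < R₀ * ‖X lst ω‖ := mul_pos hR₀pos (norm_pos_iff.2 hz)
      exact ⟨hz, (le_div_iff₀ hpos).1 hω⟩
    refine le_trans (measure_mono hsub) ?_
    rw [← Measure.map_apply ((hmeas lst).prodMk (hmeas i)) hSmeas]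
    have hpair : Measure.map (fun ω => (X lst ω, X i ω)) P = μ₀.prod μ₀ := by
      rw [(indepFun_iff_map_prod_eq_prod_map_map (hmeas lst).aemeasurable
        (hmeas i).aemeasurable).1 (hindep.indepFun (Ne.symm hi)), hdist lst, hdist i]
    rw [hpair, Measure.prod_apply hSmeas]
    have hslice : ∀ z : EuclideanSpace ℝ (Fin n),
        μ₀ (Prod.mk z ⁻¹' S) ≤ ENNReal.ofReal (Real.exp (-2 * (1 - δ) * R₀ ^ 2)) := by
      intro z
      by_cases hz : z = 0
      · have hempty : Prod.mk z ⁻¹' S = ∅ := by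
          ext x; simp [hSdef, hz]
        simp [hempty]
      · have hzpos : 0 < ‖z‖ := norm_pos_iff.2 hz
        have hseq : Prod.mk z ⁻¹' S =
            {x : EuclideanSpace ℝ (Fin n) | c * (R₀ * ‖z‖) ≤ ⟪x, z⟫} := by
          ext x; simp [hSdef, hz]
        have hBmeas : MeasurableSet {x : EuclideanSpace ℝ (Fin n) | c * (R₀ * ‖z‖) ≤ ⟪x, z⟫} := by
          apply measurableSet_le measurable_const
          exact (continuous_inner.comp (continuous_id.prodMk continuous_const)).measurable
        rw [hseq, hμ₀, Measure.map_apply e.measurable hBmeas]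
        have hpreq : (⇑e) ⁻¹' {x : EuclideanSpace ℝ (Fin n) | c * (R₀ * ‖z‖) ≤ ⟪x, z⟫} =
            {y : Fin n → ℝ | c * (R₀ * ‖z‖) ≤ ∑ k, y k * z k} := by
          ext y
          simp only [Set.mem_preimage, Set.mem_setOf_eq]
          have : ⟪e y, z⟫ = ∑ k, y k * z k := by
            rw [PiLp.inner_apply]
            refine Finset.sum_congr rfl fun k _ => ?_
            rw [RCLike.inner_apply, starRingEnd_apply, star_trivial]
            exact mul_comm _ _
          rw [this]
        rw [hpreq]
        have hnz2 : ∑ k, (z k) ^ 2 = ‖z‖ ^ 2 := by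
          rw [EuclideanSpace.norm_eq, Real.sq_sqrt (by positivity)]
          simp only [Real.norm_eq_abs, sq_abs]
        have hCeq : ∑ k, ((max (-(m k) * z k) ((1 - m k) * z k)) -
            (min (-(m k) * z k) ((1 - m k) * z k))) ^ 2 = ‖z‖ ^ 2 := by
          rw [← hnz2]
          apply Finset.sum_congr rfl
          intro k _
          rw [max_sub_min_eq_abs, show (1 - m k) * z k - -(m k) * z k = z k from by ring,
            sq_abs]
        have hC : 0 < ∑ k, ((max (-(m k) * z k) ((1 - m k) * z k)) -
            (min (-(m k) * z k) ((1 - m k) * z k))) ^ 2 := by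
          rw [hCeq]; positivity
        have hhf := hoeffding_pi ν (fun k u => u * z k)
          (fun k => measurable_id.mul_const _)
          (fun k => min (-(m k) * z k) ((1 - m k) * z k))
          (fun k => max (-(m k) * z k) ((1 - m k) * z k))
          (fun k => by
            filter_upwards [hae k] with u hu
            exact mul_mem_Icc_minmax hu)
          (fun k => by rw [integral_mul_const, hmean k, zero_mul])
          (c * (R₀ * ‖z‖)) (by positivity) hC
        rw [hCeq] at hhf
        rw [ENNReal.le_ofReal_iff_toReal_le (measure_ne_top _ _) (Real.exp_pos _).le]
        refine hhf.trans (le_of_eq ?_)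
        congr 1
        rw [mul_pow, mul_pow, hc2]
        field_simp
    calc ∫⁻ z, μ₀ (Prod.mk z ⁻¹' S) ∂μ₀
        ≤ ∫⁻ _z, ENNReal.ofReal (Real.exp (-2 * (1 - δ) * R₀ ^ 2)) ∂μ₀ := lintegral_mono hslice
      _ = ENNReal.ofReal (Real.exp (-2 * (1 - δ) * R₀ ^ 2)) := by
          rw [lintegral_const, measure_univ, mul_one]
      _ ≤ ENNReal.ofReal e₂ := by
          apply ENNReal.ofReal_le_ofReal
          rw [he₂]
          apply Real.exp_le_exp.2
          rw [le_div_iff₀ hn']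
          have k1 : (2 - 3 * δ) ^ 2 ≤ 4 * (1 - δ) := by nlinarith
          have k2 : R₀ ^ 4 ≤ R₀ ^ 2 * ((n : ℝ) / 4) := by nlinarith
          nlinarith [k1, k2, mul_pos hR2pos hn', sq_nonneg (2 - 3 * δ),
            mul_le_mul_of_nonneg_left k1 (mul_pos hR2pos hn').le,
            mul_le_mul_of_nonneg_right k2 (sq_nonneg (2 - 3 * δ))]
  -- final assembly
  set G : Set Ω := {ω | (∀ j : Fin M, 1 - δ ≤ ‖X j ω‖ ^ 2 / R₀ ^ 2 ∧ ‖X j ω‖ ^ 2 / R₀ ^ 2 ≤ 1 + δ) ∧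
      ∀ i : Fin M, i ≠ lst →
        ⟪X i ω, X lst ω⟫ / (R₀ * ‖X lst ω‖) < c} with hG
  have hGmeas : MeasurableSet G := by
    have hrepr : G = (⋂ j, {ω | 1 - δ ≤ ‖X j ω‖ ^ 2 / R₀ ^ 2 ∧ ‖X j ω‖ ^ 2 / R₀ ^ 2 ≤ 1 + δ}) ∩
        (⋂ i, {ω | i ≠ lst → ⟪X i ω, X lst ω⟫ / (R₀ * ‖X lst ω‖) < c}) := by
      ext ω
      simp only [hG, Set.mem_setOf_eq, Set.mem_inter_iff, Set.mem_iInter]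
    rw [hrepr]
    apply MeasurableSet.inter
    · apply MeasurableSet.iInter
      intro j
      have hfm : Measurable fun x : EuclideanSpace ℝ (Fin n) => ‖x‖ ^ 2 / R₀ ^ 2 :=
        ((continuous_norm.pow 2).div_const _).measurable
      exact measurableSet_Icc.preimage (hfm.comp (hmeas j))
    · apply MeasurableSet.iInter
      intro i
      by_cases hi : i = lst
      · have : {ω | i ≠ lst → ⟪X i ω, X lst ω⟫ / (R₀ * ‖X lst ω‖) < c} = Set.univ := by
          ext ω; simp [hi]
        rw [this]; exact MeasurableSet.univ
      · have : {ω | i ≠ lst → ⟪X i ω, X lst ω⟫ / (R₀ * ‖X lst ω‖) < c} =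
            {ω | ⟪X i ω, X lst ω⟫ / (R₀ * ‖X lst ω‖) < c} := by
          ext ω; simp [hi]
        rw [this]
        have hip : Measurable fun ω => ⟪X i ω, X lst ω⟫ :=
          continuous_inner.measurable.comp ((hmeas i).prodMk (hmeas lst))
        have hd : Measurable fun ω => R₀ * ‖X lst ω‖ := (hmeas lst).norm.const_mul R₀
        exact measurableSet_lt (hip.div hd) measurable_const
  have hcover : Gᶜ ⊆ (⋃ j, {ω | ¬(1 - δ ≤ ‖X j ω‖ ^ 2 / R₀ ^ 2 ∧ ‖X j ω‖ ^ 2 / R₀ ^ 2 ≤ 1 + δ)}) ∪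
      (⋃ i, (if i = lst then (∅ : Set Ω)
        else {ω | ¬(⟪X i ω, X lst ω⟫ / (R₀ * ‖X lst ω‖) < c)})) := by
    intro ω hω
    simp only [Set.mem_compl_iff, hG, Set.mem_setOf_eq, not_and_or] at hω
    rcases hω with hω | hω
    · left
      push_neg at hω
      obtain ⟨j, hj⟩ := hω
      exact Set.mem_iUnion.2 ⟨j, by simpa using hj⟩
    · right
      push_neg at hω
      obtain ⟨i, hi1, hi2⟩ := hω
      refine Set.mem_iUnion.2 ⟨i, ?_⟩
      rw [if_neg hi1]
      simpa using hi2
  have hbound : P Gᶜ ≤ (M : ENNReal) * ENNReal.ofReal (2 * e₁) +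
      ((M - 1 : ℕ) : ENNReal) * ENNReal.ofReal e₂ := by
    refine le_trans (measure_mono hcover) (le_trans (measure_union_le _ _) ?_)
    have h1 : P (⋃ j, {ω | ¬(1 - δ ≤ ‖X j ω‖ ^ 2 / R₀ ^ 2 ∧ ‖X j ω‖ ^ 2 / R₀ ^ 2 ≤ 1 + δ)}) ≤
        (M : ENNReal) * ENNReal.ofReal (2 * e₁) := by
      refine le_trans (measure_iUnion_le _) ?_
      rw [tsum_fintype]
      calc ∑ j : Fin M, P {ω | ¬(1 - δ ≤ ‖X j ω‖ ^ 2 / R₀ ^ 2 ∧ ‖X j ω‖ ^ 2 / R₀ ^ 2 ≤ 1 + δ)}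
          ≤ ∑ _j : Fin M, ENNReal.ofReal (2 * e₁) :=
            Finset.sum_le_sum fun j _ => hnormtail j
        _ = (M : ENNReal) * ENNReal.ofReal (2 * e₁) := by
            rw [Finset.sum_const, Finset.card_univ, Fintype.card_fin, nsmul_eq_mul]
    have h2 : P (⋃ i, (if i = lst then (∅ : Set Ω)
        else {ω | ¬(⟪X i ω, X lst ω⟫ / (R₀ * ‖X lst ω‖) < c)})) ≤
        ((M - 1 : ℕ) : ENNReal) * ENNReal.ofReal e₂ := by
      refine le_trans (measure_iUnion_le _) ?_
      rw [tsum_fintype]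
      calc ∑ i : Fin M, P (if i = lst then (∅ : Set Ω)
            else {ω | ¬(⟪X i ω, X lst ω⟫ / (R₀ * ‖X lst ω‖) < c)})
          ≤ ∑ i : Fin M, (if i = lst then 0 else ENNReal.ofReal e₂) := by
            refine Finset.sum_le_sum fun i _ => ?_
            by_cases hi : i = lst
            · simp [hi]
            · rw [if_neg hi, if_neg hi]
              exact hdottail i hi
        _ = ((M - 1 : ℕ) : ENNReal) * ENNReal.ofReal e₂ := by
            rw [← Finset.sum_erase_add Finset.univ _ (Finset.mem_univ lst), if_pos rfl,
              add_zero]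
            rw [show (∑ i ∈ Finset.univ.erase lst,
                if i = lst then (0:ENNReal) else ENNReal.ofReal e₂) =
                ∑ _i ∈ Finset.univ.erase lst, ENNReal.ofReal e₂ from
              Finset.sum_congr rfl fun i hi => if_neg (Finset.ne_of_mem_erase hi)]
            rw [Finset.sum_const, Finset.card_erase_of_mem (Finset.mem_univ lst),
              Finset.card_univ, Fintype.card_fin, nsmul_eq_mul]
    exact add_le_add h1 h2
  have hsplit : (P G).toReal + (P Gᶜ).toReal = 1 := by
    rw [← ENNReal.toReal_add (measure_ne_top _ _) (measure_ne_top _ _),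
      prob_add_prob_compl hGmeas, ENNReal.toReal_one]
  have hMm1 : ((M - 1 : ℕ) : ℝ) = (M : ℝ) - 1 := by
    rw [Nat.cast_sub hM, Nat.cast_one]
  have hq : (P Gᶜ).toReal ≤ 2 * M * e₁ + ((M : ℝ) - 1) * e₂ := by
    have hm1 : (M : ENNReal) * ENNReal.ofReal (2 * e₁) ≠ ⊤ :=
      ENNReal.mul_ne_top (ENNReal.natCast_ne_top _) ENNReal.ofReal_ne_top
    have hm2 : ((M - 1 : ℕ) : ENNReal) * ENNReal.ofReal e₂ ≠ ⊤ :=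
      ENNReal.mul_ne_top (ENNReal.natCast_ne_top _) ENNReal.ofReal_ne_top
    have hBne : (M : ENNReal) * ENNReal.ofReal (2 * e₁) +
        ((M - 1 : ℕ) : ENNReal) * ENNReal.ofReal e₂ ≠ ⊤ :=
      ENNReal.add_ne_top.2 ⟨hm1, hm2⟩
    have hh := (ENNReal.toReal_le_toReal (measure_ne_top _ _) hBne).2 hbound
    rw [ENNReal.toReal_add hm1 hm2, ENNReal.toReal_mul, ENNReal.toReal_mul,
      ENNReal.toReal_natCast, ENNReal.toReal_natCast,
      ENNReal.toReal_ofReal (by positivity), ENNReal.toReal_ofReal he₂pos.le, hMm1] at hh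
    linarith [hh]
  linarith [hsplit, hq]
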